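/- Correctness of lazy multiply invariant: in a segment tree where each node v stores sum(v) and a pending multiplier mult(v), and the true value of leaf ℓ is its stored base value times the product of mult(v) over all ancestors v of ℓ, the LazyMultiply operation on range [l,r] with factor c (which multiplies mult and sum at fully-contained nodes and pushes mult down at partially-intersecting nodes) preserves the invariant that sum(v) · ∏_{ancestors u of v} mult(u) equals the sum of true values of leaves under v, and results in every true leaf value in [l,r] being multiplied by c while leaves outside [l,r] are unchanged. -/

import Mathlib

/-- A segment tree node: either a leaf (storing its index, its stored value `sum`
and a pending multiplier `mult`) or an internal node (storing the range `[low, high]`,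
the aggregate `sum` and the pending multiplier `mult`, plus two children). -/
inductive STree where
  | leaf (idx : ℕ) (sum mult : ℝ)
  | node (low high : ℕ) (sum mult : ℝ) (lc rc : STree)

namespace STree

/-- The stored `sum` field of the root of a tree. -/
def sumOf : STree → ℝ
  | leaf _ s _ => s
  | node _ _ s _ _ _ => s

/-- Sum of the *true* values of all leaves of `t`, where `acc` is the accumulated
product of the `mult` fields of the (strict) ancestors of `t`: the true value of a
leaf is its stored value times the product of `mult` over all ancestors. -/
def total (acc : ℝ) : STree → ℝ
  | leaf _ s _ => acc * s
  | node _ _ _ m lc rc => total (acc * m) lc + total (acc * m) rc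

/-- Sum of the true values of the leaves of `t` whose index lies in `[l, r]`,
with accumulated ancestor multiplier `acc`. -/
def rSum (acc : ℝ) (l r : ℕ) : STree → ℝ
  | leaf i s _ => if l ≤ i ∧ i ≤ r then acc * s else 0
  | node _ _ _ m lc rc => rSum (acc * m) l r lc + rSum (acc * m) l r rc

/-- The lazy-propagation invariant: at every internal node, the stored `sum`
(scaled by the ancestor multipliers) equals the sum of the true values of the
leaves below it, i.e. `sum = total mult lc + total mult rc`. -/
def Inv : STree → Prop
  | leaf _ _ _ => True
  | node _ _ s m lc rc => s = total m lc + total m rc ∧ Inv lc ∧ Inv rc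

/-- The list of leaf indices of a tree. -/
def idxs : STree → List ℕ
  | leaf i _ _ => [i]
  | node _ _ _ _ lc rc => idxs lc ++ idxs rc

/-- Well-formedness: every leaf index below a node lies within that node's range. -/
def WF : STree → Prop
  | leaf _ _ _ => True
  | node lo hi _ _ lc rc => WF lc ∧ WF rc ∧ ∀ i ∈ idxs lc ++ idxs rc, lo ≤ i ∧ i ≤ hi

/-- Pushing a pending multiplier `c` onto the root of a tree (multiplying both its
`sum` and `mult` fields), as done when a parent propagates its multiplier down. -/
def applyAll (c : ℝ) : STree → STree
  | leaf i s m => leaf i (s * c) (m * c)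
  | node lo hi s m lc rc => node lo hi (s * c) (m * c) lc rc

/-- Number of nodes of a tree (for termination). -/
def size : STree → ℕ
  | leaf _ _ _ => 1
  | node _ _ _ _ lc rc => size lc + size rc + 1

theorem size_applyAll (c : ℝ) (t : STree) : size (applyAll c t) = size t := by
  cases t <;> rfl

/-- `LazyMultiply` on range `[l, r]` with factor `c`: if the node's range does not
intersect `[l, r]`, do nothing; if it is fully contained, multiply its `sum` and
`mult` by `c`; otherwise push the pending multiplier to both children, reset it
to `1`, recurse on both children and recompute `sum`. -/
def lazyMul (l r : ℕ) (c : ℝ) : STree → STree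
  | leaf i s m => if l ≤ i ∧ i ≤ r then leaf i (s * c) (m * c) else leaf i s m
  | node lo hi s m lc rc =>
      if hi < l ∨ r < lo then node lo hi s m lc rc
      else if l ≤ lo ∧ hi ≤ r then node lo hi (s * c) (m * c) lc rc
      else
        let lc' := lazyMul l r c (applyAll m lc)
        let rc' := lazyMul l r c (applyAll m rc)
        node lo hi (sumOf lc' + sumOf rc') 1 lc' rc'
  termination_by t => size t
  decreasing_by
    all_goals (simp [size_applyAll, size]; try omega)


theorem rSum_smul (a : ℝ) (l r : ℕ) (t : STree) : rSum a l r t = a * rSum 1 l r t := by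
  induction t generalizing a with
  | leaf i s m => simp only [rSum]; split <;> ring
  | node lo hi s m lc rc ih1 ih2 =>
    simp only [rSum]
    rw [ih1 (a*m), ih2 (a*m), ih1 (1*m), ih2 (1*m)]; ring

theorem total_smul (a : ℝ) (t : STree) : total a t = a * total 1 t := by
  induction t generalizing a with
  | leaf i s m => simp only [total]; ring
  | node lo hi s m lc rc ih1 ih2 =>
    simp only [total]
    rw [ih1 (a*m), ih2 (a*m), ih1 (1*m), ih2 (1*m)]; ring

theorem idxs_applyAll (c : ℝ) (t : STree) : idxs (applyAll c t) = idxs t := by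
  cases t <;> rfl

theorem wf_applyAll (c : ℝ) (t : STree) (h : WF t) : WF (applyAll c t) := by
  cases t <;> exact h

theorem inv_applyAll (c : ℝ) (t : STree) (h : Inv t) : Inv (applyAll c t) := by
  cases t with
  | leaf i s m => trivial
  | node lo hi s m lc rc =>
    obtain ⟨hs, h1, h2⟩ := h
    refine ⟨?_, h1, h2⟩
    rw [total_smul (m*c) lc, total_smul (m*c) rc, hs, total_smul m lc, total_smul m rc]
    ring

theorem rSum_applyAll (a : ℝ) (l r : ℕ) (c : ℝ) (t : STree) :
    rSum a l r (applyAll c t) = c * rSum a l r t := by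
  cases t with
  | leaf i s m => simp only [applyAll, rSum]; split <;> ring
  | node lo hi s m lc rc =>
    simp only [applyAll, rSum]
    rw [rSum_smul (a*(m*c)) l r lc, rSum_smul (a*(m*c)) l r rc,
        rSum_smul (a*m) l r lc, rSum_smul (a*m) l r rc]
    ring

theorem sumOf_eq_total (t : STree) (h : Inv t) : sumOf t = total 1 t := by
  cases t with
  | leaf i s m => simp [sumOf, total]
  | node lo hi s m lc rc => simp only [sumOf, total, one_mul]; exact h.1

theorem rSum_notmem (a : ℝ) (i : ℕ) (t : STree) (h : i ∉ idxs t) : rSum a i i t = 0 := by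
  induction t generalizing a with
  | leaf j s m =>
    simp only [idxs, List.mem_singleton] at h
    simp only [rSum]
    rw [if_neg (by omega)]
  | node lo hi s m lc rc ih1 ih2 =>
    simp only [idxs, List.mem_append, not_or] at h
    simp only [rSum, ih1 _ h.1, ih2 _ h.2, add_zero]

theorem lazyMul_aux (l r : ℕ) (c : ℝ) : ∀ n t, size t ≤ n → WF t → Inv t →
    WF (lazyMul l r c t) ∧ Inv (lazyMul l r c t) ∧
    idxs (lazyMul l r c t) = idxs t ∧
    (∀ i : ℕ, l ≤ i → i ≤ r → rSum 1 i i (lazyMul l r c t) = c * rSum 1 i i t) ∧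
    (∀ i : ℕ, i < l ∨ r < i → rSum 1 i i (lazyMul l r c t) = rSum 1 i i t) := by
  intro n
  induction n with
  | zero => intro t h; cases t <;> simp [size] at h
  | succ n ihn =>
    intro t h hwf hinv
    cases t with
    | leaf j s m =>
      rw [lazyMul]
      split
      · rename_i hin
        refine ⟨trivial, trivial, rfl, ?_, ?_⟩
        · intro i h1 h2
          simp only [rSum]
          split <;> ring
        · intro i hi
          simp only [rSum]
          rw [if_neg (by omega), if_neg (by omega)]
      · rename_i hout
        refine ⟨trivial, trivial, rfl, ?_, fun _ _ => rfl⟩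
        intro i h1 h2
        simp only [rSum]
        rw [if_neg (by omega)]
        ring
    | node lo hi s m lc rc =>
      simp only [size] at h
      have hs := hinv.1
      have hwfl := hwf.1
      have hwfr := hwf.2.1
      have hrange := hwf.2.2
      rw [lazyMul]
      split
      · rename_i hd
        refine ⟨hwf, hinv, rfl, ?_, fun _ _ => rfl⟩
        intro i h1 h2
        have hni : i ∉ idxs (node lo hi s m lc rc) := fun hm => by
          have := hrange i hm; omega
        rw [rSum_notmem _ _ _ hni]
        ring
      · split
        · rename_i hd hc
          refine ⟨hwf, ⟨?_, hinv.2.1, hinv.2.2⟩, rfl, ?_, ?_⟩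
          · rw [total_smul (m*c) lc, total_smul (m*c) rc, hs,
              total_smul m lc, total_smul m rc]
            ring
          · intro i h1 h2
            simp only [rSum]
            rw [rSum_smul (1*(m*c)) i i lc, rSum_smul (1*(m*c)) i i rc,
                rSum_smul (1*m) i i lc, rSum_smul (1*m) i i rc]
            ring
          · intro i hio
            have hni : i ∉ idxs lc ++ idxs rc := fun hm => by
              have := hrange i hm; omega
            have h1 : rSum 1 i i (node lo hi (s*c) (m*c) lc rc) = 0 :=
              rSum_notmem _ _ _ hni
            have h2 : rSum 1 i i (node lo hi s m lc rc) = 0 :=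
              rSum_notmem _ _ _ hni
            rw [h1, h2]
        · rename_i hd hc
          have hsl : size (applyAll m lc) ≤ n := by rw [size_applyAll]; omega
          have hsr : size (applyAll m rc) ≤ n := by rw [size_applyAll]; omega
          obtain ⟨W1, I1, X1, P1, Q1⟩ := ihn (applyAll m lc) hsl
            (wf_applyAll m lc hwfl) (inv_applyAll m lc hinv.2.1)
          obtain ⟨W2, I2, X2, P2, Q2⟩ := ihn (applyAll m rc) hsr
            (wf_applyAll m rc hwfr) (inv_applyAll m rc hinv.2.2)
          refine ⟨⟨W1, W2, ?_⟩, ⟨?_, I1, I2⟩, ?_, ?_, ?_⟩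
          · rw [X1, X2, idxs_applyAll, idxs_applyAll]
            exact hrange
          · rw [sumOf_eq_total _ I1, sumOf_eq_total _ I2]
          · simp only [idxs]
            rw [X1, X2, idxs_applyAll, idxs_applyAll]
          · intro i h1 h2
            simp only [rSum]
            rw [rSum_smul (1*1) i i (lazyMul l r c (applyAll m lc)),
                rSum_smul (1*1) i i (lazyMul l r c (applyAll m rc)),
                P1 i h1 h2, P2 i h1 h2, rSum_applyAll, rSum_applyAll,
                rSum_smul (1*m) i i lc, rSum_smul (1*m) i i rc]
            ring
          · intro i hi
            simp only [rSum]
            rw [rSum_smul (1*1) i i (lazyMul l r c (applyAll m lc)),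
                rSum_smul (1*1) i i (lazyMul l r c (applyAll m rc)),
                Q1 i hi, Q2 i hi, rSum_applyAll, rSum_applyAll,
                rSum_smul (1*m) i i lc, rSum_smul (1*m) i i rc]
            ring

/-- Correctness of `LazyMultiply`: on a well-formed tree satisfying the
lazy-propagation invariant, `lazyMul l r c` preserves well-formedness and the
invariant, multiplies the true value of every leaf with index in `[l, r]` by `c`,
and leaves the true values of all other leaves unchanged. -/
theorem lazyMul_correct (t : STree) (l r : ℕ) (c : ℝ) (hwf : WF t) (hinv : Inv t) :
    WF (lazyMul l r c t) ∧ Inv (lazyMul l r c t) ∧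
    (∀ i : ℕ, l ≤ i → i ≤ r → rSum 1 i i (lazyMul l r c t) = c * rSum 1 i i t) ∧
    (∀ i : ℕ, i < l ∨ r < i → rSum 1 i i (lazyMul l r c t) = rSum 1 i i t) := by
  obtain ⟨W, I, _, P, Q⟩ := lazyMul_aux l r c (size t) t le_rfl hwf hinv
  exact ⟨W, I, P, Q⟩

end STree
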